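/- arXiv:2504.02977 — 4 statements merged into one kernel-verified Lean document; each statement's English description precedes it below -/
import Mathlib

section
/- Let G be a finite simple graph. Then the enhanced zero forcing number of G equals |V(G)| minus the minimum of the triangle numbers of the patterns in S_znz(G); that is, Ẑ(G) = |V(G)| − min{ tri(𝒜) : 𝒜 ∈ S_znz(G) }. -/
/-!  Common definitions: zero forcing (standard, loop, positive semidefinite),
zero-nonzero patterns, triangles, and related graph parameters. -/

variable {V : Type*}

/-- Standard zero forcing rule: with filled set `S`, the filled vertex `v` can force
its unique unfilled neighbor `u`. -/
def StdForce (G : SimpleGraph V) (S : Set V) (v u : V) : Prop :=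
  v ∈ S ∧ u ∉ S ∧ G.Adj v u ∧ ∀ w, G.Adj v w → w ∉ S → w = u

/-- Adjacency in the looping of `G` with loops at the vertices in `L`
(a vertex counts as its own neighbor iff it has a loop). -/
def LoopAdj (G : SimpleGraph V) (L : Set V) (v w : V) : Prop :=
  G.Adj v w ∨ (v = w ∧ v ∈ L)

/-- Loop zero forcing rule (the forcing vertex need not be filled): `v` can force `u`
if `u` is the only unfilled neighbor of `v` in the looping. -/
def LoopForce (G : SimpleGraph V) (L : Set V) (S : Set V) (v u : V) : Prop :=
  u ∉ S ∧ LoopAdj G L v u ∧ ∀ w, LoopAdj G L v w → w ∉ S → w = u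

/-- Positive semidefinite zero forcing rule: the filled vertex `v` can force the unfilled
vertex `u` if `u` is the only neighbor of `v` in the connected component of `u` of the
subgraph induced by the unfilled vertices. -/
def PsdForce (G : SimpleGraph V) (S : Set V) (v u : V) : Prop :=
  v ∈ S ∧ u ∉ S ∧ G.Adj v u ∧
    ∀ w, G.Adj v w → w ∉ S →
      Relation.ReflTransGen (fun a b => G.Adj a b ∧ a ∉ S ∧ b ∉ S) u w → w = u

/-- The vertices performing a force in a forcing sequence. -/
def sourcesOf (seq : List (V × V)) : Set V := {v | ∃ p ∈ seq, p.1 = v}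

/-- The vertices that get forced in a forcing sequence. -/
def targetsOf (seq : List (V × V)) : Set V := {u | ∃ p ∈ seq, p.2 = u}

/-- The filled set after performing all forces of `seq` starting from `F`. -/
def filledAfter (F : Set V) (seq : List (V × V)) : Set V := F ∪ targetsOf seq

/-- `ValidSeq rule seq F`: starting with `F` as the filled set, the sequence of forces
`seq` is permitted (each force in turn is allowed by `rule`, and each vertex forces
at most once). -/
def ValidSeq (rule : Set V → V → V → Prop) : List (V × V) → Set V → Prop
  | [], _ => True
  | (v, u) :: rest, F => rule F v u ∧ (∀ p ∈ rest, p.1 ≠ v) ∧ ValidSeq rule rest (insert u F)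

/-- `F` is a zero forcing set w.r.t. the forcing rule `rule`. -/
def IsZFSet (rule : Set V → V → V → Prop) (F : Set V) : Prop :=
  ∃ seq : List (V × V), ValidSeq rule seq F ∧ filledAfter F seq = Set.univ

/-- `F` is a zero forcing set (w.r.t. `rule`) from which `R` can be the set of vertices
that force: some (automatically complete) forcing sequence from `F` fills every vertex
and the set of vertices performing a force is exactly `R`. -/
def ForcesWith (rule : Set V → V → V → Prop) (F R : Set V) : Prop :=
  ∃ seq : List (V × V), ValidSeq rule seq F ∧ filledAfter F seq = Set.univ ∧
    sourcesOf seq = R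

/-- The zero forcing number w.r.t. a forcing rule. -/
noncomputable def Znum (rule : Set V → V → V → Prop) : ℕ :=
  sInf {n | ∃ F : Set V, IsZFSet rule F ∧ F.ncard = n}

/-- The (standard) zero forcing number `Z(G)`. -/
noncomputable def Z (G : SimpleGraph V) : ℕ := Znum (StdForce G)

/-- The zero forcing number of the looping of `G` with loops at `L`. -/
noncomputable def Zloop (G : SimpleGraph V) (L : Set V) : ℕ := Znum (LoopForce G L)

/-- The positive semidefinite zero forcing number `Z₊(G)`. -/
noncomputable def Zplus (G : SimpleGraph V) : ℕ := Znum (PsdForce G)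

/-- The enhanced zero forcing number `Ẑ(G)`: the maximum over all loopings of `G` of the
zero forcing number of the looping. -/
noncomputable def Zhat (G : SimpleGraph V) : ℕ := sSup {n | ∃ L : Set V, Zloop G L = n}

/-- `F` is a direct zero forcing set for `G`: some forcing sequence from `F` fills every
vertex and every vertex that performs a force belongs to `F`. -/
def IsDirectZFSet (G : SimpleGraph V) (F : Set V) : Prop :=
  ∃ seq : List (V × V), ValidSeq (StdForce G) seq F ∧ filledAfter F seq = Set.univ ∧
    sourcesOf seq ⊆ F

/-- The direct zero forcing number `Z_d(G)`. -/
noncomputable def Zd (G : SimpleGraph V) : ℕ :=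
  sInf {n | ∃ F : Set V, IsDirectZFSet G F ∧ F.ncard = n}

/-- A zero-nonzero pattern `Y` (entry `Y i j` means the `(i,j)` entry is `*`)
has a `k × k` submatrix that is a triangle. -/
def HasTriOfSize {ρ γ : Type*} (Y : ρ → γ → Prop) (k : ℕ) : Prop :=
  ∃ (r : Fin k → ρ) (c : Fin k → γ), Function.Injective r ∧ Function.Injective c ∧
    (∀ i, Y (r i) (c i)) ∧ ∀ i j : Fin k, i < j → ¬ Y (r i) (c j)

/-- The triangle number `tri(Y)` of a zero-nonzero pattern. -/
noncomputable def tri {ρ γ : Type*} (Y : ρ → γ → Prop) : ℕ := sSup {k | HasTriOfSize Y k}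

/-- Membership in `S_znz(G)`: off the diagonal, the pattern matches the adjacency of `G`. -/
def InSznz (G : SimpleGraph V) (A : V → V → Prop) : Prop :=
  ∀ i j : V, i ≠ j → (A i j ↔ G.Adj i j)

/-- The zero-nonzero pattern of the looping of `G` with loops at `L`. -/
def loopPattern (G : SimpleGraph V) (L : Set V) : V → V → Prop :=
  fun i j => (i = j ∧ i ∈ L) ∨ (i ≠ j ∧ G.Adj i j)

/-- The submatrix of the pattern `Y` with rows `R` and columns `C` is a triangle:
there are enumerations of `R` and `C` realizing a lower-triangular pattern with `*`
diagonal (in particular `|R| = |C|`). -/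
def SubIsTriangle {ρ γ : Type*} (Y : ρ → γ → Prop) (R : Finset ρ) (C : Finset γ) : Prop :=
  ∃ (k : ℕ) (r : Fin k → ρ) (c : Fin k → γ),
    Function.Injective r ∧ Function.Injective c ∧
    (∀ x : ρ, x ∈ R ↔ ∃ i, r i = x) ∧ (∀ y : γ, y ∈ C ↔ ∃ i, c i = y) ∧
    (∀ i, Y (r i) (c i)) ∧ ∀ i j : Fin k, i < j → ¬ Y (r i) (c j)

/-- `(R, C)` is a persistent triangle of `G`. -/
def PersistentTriangle (G : SimpleGraph V) (R C : Finset V) : Prop :=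
  ∀ A : V → V → Prop, InSznz G A → SubIsTriangle A R C

/-- `F` is a direct zero forcing set for `G` from which `R` can be the set of vertices
that force. -/
def DirectForcesWith (G : SimpleGraph V) (F R : Set V) : Prop :=
  ∃ seq : List (V × V), ValidSeq (StdForce G) seq F ∧ filledAfter F seq = Set.univ ∧
    sourcesOf seq = R ∧ R ⊆ F

/-- `(range r, range c)` is a partition of `G` according to the `m × n` pattern `Y`,
with labelings given by `r` and `c`. -/
def PartitionAccording (G : SimpleGraph V) {m n : ℕ} (Y : Fin m → Fin n → Prop)
    (r : Fin m → V) (c : Fin n → V) : Prop :=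
  Function.Injective r ∧ Function.Injective c ∧ (∀ i j, r i ≠ c j) ∧
    (∀ v : V, (∃ i, r i = v) ∨ (∃ j, c j = v)) ∧
    ∀ i j, G.Adj (r i) (c j) ↔ Y i j

/-- `F` is a zero forcing set for `G` that forces from `V1` to `V2`. -/
def ForcesFromTo (G : SimpleGraph V) (F V1 V2 : Set V) : Prop :=
  V1 ⊆ F ∧ ∃ seq : List (V × V), ValidSeq (StdForce G) seq F ∧
    filledAfter F seq = Set.univ ∧ sourcesOf seq ⊆ V1 ∧ targetsOf seq ⊆ V2

/-- `(V1, V2)` is a partition of the vertex set of `G` into two cliques. -/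
def IsCliquePartition (G : SimpleGraph V) (V1 V2 : Set V) : Prop :=
  Disjoint V1 V2 ∧ V1 ∪ V2 = Set.univ ∧ G.IsClique V1 ∧ G.IsClique V2

/-- `G` is cobipartite. -/
def Cobipartite (G : SimpleGraph V) : Prop := ∃ V1 V2 : Set V, IsCliquePartition G V1 V2

/-- `G` is the cobipartite graph associated with the pattern `Y`, via labelings `r`, `c`. -/
def CobipAssociated (G : SimpleGraph V) {m n : ℕ} (Y : Fin m → Fin n → Prop)
    (r : Fin m → V) (c : Fin n → V) : Prop :=
  PartitionAccording G Y r c ∧ G.IsClique (Set.range r) ∧ G.IsClique (Set.range c)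

/-- `z` is a critical vertex: some optimal forcing sequence neither lets `z` force
nor forces `z`. -/
def Critical (G : SimpleGraph V) (z : V) : Prop :=
  ∃ (F : Set V) (seq : List (V × V)), F.ncard = Z G ∧ ValidSeq (StdForce G) seq F ∧
    filledAfter F seq = Set.univ ∧ z ∉ sourcesOf seq ∧ z ∉ targetsOf seq

/-- `z` is an uncritical vertex: in every optimal forcing sequence, exactly one of the
following holds: `z` performs a force, or `z` gets forced. -/
def Uncritical (G : SimpleGraph V) (z : V) : Prop :=
  ∀ (F : Set V) (seq : List (V × V)), F.ncard = Z G → ValidSeq (StdForce G) seq F →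
    filledAfter F seq = Set.univ → (z ∈ sourcesOf seq ↔ z ∉ targetsOf seq)

/-- The maximum nullity `M(G)` over the field `𝔽`. -/
noncomputable def Mnum (𝔽 : Type*) [Field 𝔽] [Fintype V] [DecidableEq V]
    (G : SimpleGraph V) : ℕ :=
  sSup {k | ∃ A : Matrix V V 𝔽, A.IsSymm ∧ (∀ i j : V, i ≠ j → (A i j ≠ 0 ↔ G.Adj i j)) ∧
    k = Fintype.card V - A.rank}

/-- The minimum rank `mr_𝔽(Y)` of a zero-nonzero pattern over the field `𝔽`. -/
noncomputable def mr (𝔽 : Type*) [Field 𝔽] {m n : ℕ} (Y : Fin m → Fin n → Prop) : ℕ :=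
  sInf {k | ∃ A : Matrix (Fin m) (Fin n) 𝔽, (∀ i j, A i j ≠ 0 ↔ Y i j) ∧ A.rank = k}

/-- `G` is a `k`-tree: there is a construction ordering of the vertices in which the
first `k+1` vertices form a clique and every later vertex is adjacent among the earlier
vertices to exactly a `k`-clique. -/
def IsKTree (k : ℕ) [Fintype V] (G : SimpleGraph V) : Prop :=
  k + 1 ≤ Fintype.card V ∧ ∃ ord : V ≃ Fin (Fintype.card V),
    (∀ u v : V, (ord u : ℕ) < k + 1 → (ord v : ℕ) < k + 1 → u ≠ v → G.Adj u v) ∧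
    ∀ v : V, k + 1 ≤ (ord v : ℕ) →
      G.IsClique {u : V | (ord u : ℕ) < (ord v : ℕ) ∧ G.Adj u v} ∧
      {u : V | (ord u : ℕ) < (ord v : ℕ) ∧ G.Adj u v}.ncard = k


section AuxZhat

set_option linter.unusedSectionVars false

variable {V : Type*} [Fintype V] [DecidableEq V]

lemma loopAdj_iff (G : SimpleGraph V) (L : Set V) (v w : V) :
    LoopAdj G L v w ↔ loopPattern G L v w := by
  unfold LoopAdj loopPattern
  constructor
  · rintro (h | h)
    · exact Or.inr ⟨G.ne_of_adj h, h⟩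
    · exact Or.inl h
  · rintro (h | h)
    · exact Or.inr h
    · exact Or.inl h.2

lemma validSeq_of_triangle (G : SimpleGraph V) (L : Set V) :
    ∀ (k : ℕ) (r c : Fin k → V), Function.Injective r → Function.Injective c →
    (∀ i, LoopAdj G L (r i) (c i)) →
    (∀ i j, i < j → ¬ LoopAdj G L (r i) (c j)) →
    ∀ F : Set V, (Set.range c)ᶜ ⊆ F → Disjoint F (Set.range c) →
    ValidSeq (LoopForce G L) ((List.finRange k).map fun i => (r i, c i)) F := by
  intro k
  induction k with
  | zero => intro r c _ _ _ _ F _ _; simp [ValidSeq]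
  | succ k ih =>
    intro r c hr hc hd hu F hsub hdisj
    rw [List.finRange_succ, List.map_cons, List.map_map]
    refine ⟨⟨Set.disjoint_right.mp hdisj (Set.mem_range_self 0), hd 0, ?_⟩, ?_, ?_⟩
    · intro w hw hwF
      have hwr : w ∈ Set.range c := by
        by_contra hcon
        exact hwF (hsub hcon)
      obtain ⟨j, rfl⟩ := hwr
      by_contra hne
      have h0j : (0 : Fin (k+1)) < j := by
        rcases Fin.eq_zero_or_eq_succ j with h | ⟨j', rfl⟩
        · exact absurd (h ▸ rfl) hne
        · exact Fin.succ_pos j'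
      exact hu 0 j h0j hw
    · intro p hp
      simp only [List.mem_map, List.mem_finRange, Function.comp] at hp
      obtain ⟨i, _, rfl⟩ := hp
      exact fun h => Fin.succ_ne_zero i (hr h)
    · have := ih (r ∘ Fin.succ) (c ∘ Fin.succ)
        (hr.comp (Fin.succ_injective k)) (hc.comp (Fin.succ_injective k))
        (fun i => hd i.succ)
        (fun i j hij => hu i.succ j.succ (Fin.succ_lt_succ_iff.mpr hij))
        (insert (c 0) F) ?_ ?_
      · exact this
      · intro w hw
        simp only [Set.mem_compl_iff, Set.mem_range, Function.comp] at hw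
        push_neg at hw
        by_cases hwr : w ∈ Set.range c
        · obtain ⟨j, rfl⟩ := hwr
          rcases Fin.eq_zero_or_eq_succ j with rfl | ⟨j', rfl⟩
          · exact Set.mem_insert _ _
          · exact absurd rfl (hw j')
        · exact Set.mem_insert_of_mem _ (hsub hwr)
      · rw [Set.disjoint_right]
        rintro a ⟨i, rfl⟩
        simp only [Function.comp, Set.mem_insert_iff]
        push_neg
        refine ⟨fun h => Fin.succ_ne_zero i (hc h), ?_⟩
        exact Set.disjoint_right.mp hdisj (Set.mem_range_self _)

lemma targetsOf_map_finRange {k : ℕ} (r c : Fin k → V) :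
    targetsOf ((List.finRange k).map fun i => (r i, c i)) = Set.range c := by
  ext u
  simp only [targetsOf, List.mem_map, List.mem_finRange, Set.mem_setOf_eq, Set.mem_range,
    true_and]
  constructor
  · rintro ⟨p, ⟨i, rfl⟩, rfl⟩; exact ⟨i, rfl⟩
  · rintro ⟨i, rfl⟩; exact ⟨(r i, c i), ⟨i, rfl⟩, rfl⟩

lemma validSeq_props (G : SimpleGraph V) (L : Set V) :
    ∀ (seq : List (V × V)) (F : Set V), ValidSeq (LoopForce G L) seq F →
    ∀ i (hi : i < seq.length),
      (LoopAdj G L (seq.get ⟨i, hi⟩).1 (seq.get ⟨i, hi⟩).2 ∧ (seq.get ⟨i, hi⟩).2 ∉ F) ∧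
      ∀ j (hj : j < seq.length), i < j →
        (seq.get ⟨i, hi⟩).1 ≠ (seq.get ⟨j, hj⟩).1 ∧
        (seq.get ⟨i, hi⟩).2 ≠ (seq.get ⟨j, hj⟩).2 ∧
        ¬ LoopAdj G L (seq.get ⟨i, hi⟩).1 (seq.get ⟨j, hj⟩).2 := by
  intro seq
  induction seq with
  | nil => intro F _ i hi; simp at hi
  | cons p rest ih =>
    obtain ⟨v, u⟩ := p
    intro F h i hi
    obtain ⟨hf, hsrc, hrest⟩ := h
    have IH := ih (insert u F) hrest
    match i, hi with
    | 0, hi =>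
      refine ⟨⟨hf.2.1, hf.1⟩, ?_⟩
      intro j hj hij
      match j, hj with
      | (j' + 1), hj =>
        have hj' : j' < rest.length := Nat.succ_lt_succ_iff.mp hj
        have hmem : rest.get ⟨j', hj'⟩ ∈ rest := List.get_mem _ _
        have htgt := (IH j' hj').1.2
        simp only [Set.mem_insert_iff, not_or] at htgt
        refine ⟨fun h => hsrc _ hmem h.symm, fun h => htgt.1 h.symm, ?_⟩
        intro hadj
        exact htgt.1 (hf.2.2 _ hadj htgt.2)
    | (i' + 1), hi =>
      have hi' : i' < rest.length := Nat.succ_lt_succ_iff.mp hi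
      refine ⟨⟨(IH i' hi').1.1, fun h => (IH i' hi').1.2 (Set.mem_insert_of_mem _ h)⟩, ?_⟩
      intro j hj hij
      match j, hj with
      | (j' + 1), hj =>
        have hj' : j' < rest.length := Nat.succ_lt_succ_iff.mp hj
        exact (IH i' hi').2 j' hj' (Nat.succ_lt_succ_iff.mp hij)

lemma hasTri_bddAbove (A : V → V → Prop) : BddAbove {k | HasTriOfSize A k} := by
  refine ⟨Fintype.card V, ?_⟩
  rintro k ⟨r, c, hr, hc, _, _⟩
  simpa using Fintype.card_le_of_injective r hr

lemma hasTri_zero (A : V → V → Prop) : HasTriOfSize A 0 :=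
  ⟨Fin.elim0, Fin.elim0, fun i => i.elim0, fun i => i.elim0, fun i => i.elim0, fun i => i.elim0⟩

lemma ncard_range_inj {k : ℕ} {c : Fin k → V} (hc : Function.Injective c) :
    (Set.range c).ncard = k := by
  rw [Set.ncard_eq_toFinset_card', Set.toFinset_range]
  rw [Finset.card_image_of_injective _ hc]
  simp

/-- Key lemma: `Zloop G L + tri (loopPattern G L) = |V|`. -/
lemma zloop_add_tri (G : SimpleGraph V) (L : Set V) :
    Zloop G L + tri (loopPattern G L) = Fintype.card V := by
  set A := loopPattern G L with hA
  have hiff : ∀ v w, LoopAdj G L v w ↔ A v w := loopAdj_iff G L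
  -- tri is attained
  have htri_mem : HasTriOfSize A (tri A) := by
    have h0 : (0 : ℕ) ∈ {k | HasTriOfSize A k} := hasTri_zero A
    exact Nat.sSup_mem ⟨0, h0⟩ (hasTri_bddAbove A)
  obtain ⟨r, c, hr, hc, hd, hu⟩ := htri_mem
  -- direction 1 : Zloop ≤ n - tri
  have hzf : IsZFSet (LoopForce G L) (Set.range c)ᶜ := by
    refine ⟨(List.finRange (tri A)).map fun i => (r i, c i), ?_, ?_⟩
    · exact validSeq_of_triangle G L (tri A) r c hr hc
        (fun i => (hiff _ _).mpr (hd i)) (fun i j hij h => hu i j hij ((hiff _ _).mp h))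
        _ (subset_refl _) disjoint_compl_left
    · rw [filledAfter, targetsOf_map_finRange, Set.compl_union_self]
  have hcount : (Set.range c)ᶜ.ncard + tri A = Fintype.card V := by
    have := Set.ncard_add_ncard_compl (Set.range c)
    rw [ncard_range_inj hc, Nat.card_eq_fintype_card] at this
    omega
  have hz_le : Zloop G L ≤ (Set.range c)ᶜ.ncard :=
    Nat.sInf_le ⟨(Set.range c)ᶜ, hzf, rfl⟩
  -- direction 2 : from optimal forcing set, get a triangle
  have hzmem : ∃ F : Set V, IsZFSet (LoopForce G L) F ∧ F.ncard = Zloop G L := by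
    have hne : {n | ∃ F : Set V, IsZFSet (LoopForce G L) F ∧ F.ncard = n}.Nonempty := by
      refine ⟨(Set.univ : Set V).ncard, Set.univ, ⟨[], trivial, ?_⟩, rfl⟩
      simp [filledAfter, targetsOf]
    exact Nat.sInf_mem hne
  obtain ⟨F, ⟨seq, hvs, hfill⟩, hFcard⟩ := hzmem
  have props := validSeq_props G L seq F hvs
  set m := seq.length with hm
  have htri2 : HasTriOfSize A m := by
    refine ⟨fun i => (seq.get i).1, fun i => (seq.get i).2, ?_, ?_, ?_, ?_⟩
    · intro a b hab
      by_contra hne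
      rcases lt_or_gt_of_ne hne with h | h
      · exact ((props a a.isLt).2 b b.isLt h).1 hab
      · exact ((props b b.isLt).2 a a.isLt h).1 hab.symm
    · intro a b hab
      by_contra hne
      rcases lt_or_gt_of_ne hne with h | h
      · exact ((props a a.isLt).2 b b.isLt h).2.1 hab
      · exact ((props b b.isLt).2 a a.isLt h).2.1 hab.symm
    · exact fun i => (hiff _ _).mp (props i i.isLt).1.1
    · exact fun i j hij h =>
        ((props i i.isLt).2 j j.isLt hij).2.2 ((hiff _ _).mpr h)
  have hm_le : m ≤ tri A := le_csSup (hasTri_bddAbove A) htri2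
  have hcard_le : Fintype.card V ≤ F.ncard + m := by
    have hcinj : Function.Injective (fun i : Fin m => (seq.get i).2) := by
      intro a b hab
      by_contra hne
      rcases lt_or_gt_of_ne hne with h | h
      · exact ((props a a.isLt).2 b b.isLt h).2.1 hab
      · exact ((props b b.isLt).2 a a.isLt h).2.1 hab.symm
    have htgts : targetsOf seq ⊆ Set.range (fun i : Fin m => (seq.get i).2) := by
      rintro u ⟨p, hp, rfl⟩
      obtain ⟨i, rfl⟩ := List.mem_iff_get.mp hp
      exact ⟨i, rfl⟩
    have huniv : (Set.univ : Set V) ⊆ F ∪ Set.range (fun i : Fin m => (seq.get i).2) := by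
      rw [← hfill]
      exact Set.union_subset_union_right F htgts
    calc Fintype.card V = (Set.univ : Set V).ncard := by
            rw [Set.ncard_univ, Nat.card_eq_fintype_card]
      _ ≤ (F ∪ Set.range (fun i : Fin m => (seq.get i).2)).ncard :=
            Set.ncard_le_ncard huniv (Set.toFinite _)
      _ ≤ F.ncard + (Set.range (fun i : Fin m => (seq.get i).2)).ncard :=
            Set.ncard_union_le _ _
      _ = F.ncard + m := by rw [ncard_range_inj hcinj]
  omega

lemma zloop_le_card (G : SimpleGraph V) (L : Set V) : Zloop G L ≤ Fintype.card V := by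
  have := zloop_add_tri G L
  omega

lemma inSznz_eq_loopPattern {G : SimpleGraph V} {A : V → V → Prop} (h : InSznz G A) :
    A = loopPattern G {i | A i i} := by
  funext i j
  apply propext
  unfold loopPattern
  by_cases hij : i = j
  · subst hij
    constructor
    · intro ha; exact Or.inl ⟨rfl, ha⟩
    · rintro (⟨_, ha⟩ | ⟨hne, _⟩)
      · exact ha
      · exact absurd rfl hne
  · rw [h i j hij]
    constructor
    · intro ha; exact Or.inr ⟨hij, ha⟩
    · rintro (⟨he, _⟩ | ⟨_, ha⟩)
      · exact absurd he hij
      · exact ha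

lemma inSznz_loopPattern (G : SimpleGraph V) (L : Set V) : InSznz G (loopPattern G L) := by
  intro i j hij
  unfold loopPattern
  constructor
  · rintro (⟨he, _⟩ | ⟨_, ha⟩)
    · exact absurd he hij
    · exact ha
  · intro ha; exact Or.inr ⟨hij, ha⟩

end AuxZhat

/-- `Ẑ(G) = |V(G)| − min{ tri(𝒜) : 𝒜 ∈ S_znz(G) }`. -/
theorem enhanced_zero_forcing_eq_card_sub_min_tri
    {V : Type*} [Fintype V] [DecidableEq V] (G : SimpleGraph V) :
    Zhat G = Fintype.card V - sInf {k | ∃ A : V → V → Prop, InSznz G A ∧ tri A = k} := by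
  classical
  set n := Fintype.card V with hn
  have hset : {k | ∃ A : V → V → Prop, InSznz G A ∧ tri A = k}
      = {k | ∃ L : Set V, tri (loopPattern G L) = k} := by
    ext k
    constructor
    · rintro ⟨A, hA, rfl⟩
      exact ⟨{i | A i i}, by rw [← inSznz_eq_loopPattern hA]⟩
    · rintro ⟨L, rfl⟩
      exact ⟨loopPattern G L, inSznz_loopPattern G L, rfl⟩
  rw [hset]
  have hkey : ∀ L : Set V, Zloop G L + tri (loopPattern G L) = n := fun L => zloop_add_tri G L
  -- Zhat is attained
  have hbdd : BddAbove {m | ∃ L : Set V, Zloop G L = m} := by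
    refine ⟨n, ?_⟩
    rintro m ⟨L, rfl⟩
    exact zloop_le_card G L
  have hne : {m | ∃ L : Set V, Zloop G L = m}.Nonempty := ⟨Zloop G ∅, ∅, rfl⟩
  have hZhat : Zhat G ∈ {m | ∃ L : Set V, Zloop G L = m} := Nat.sSup_mem hne hbdd
  obtain ⟨L0, hL0⟩ := hZhat
  have hInf : sInf {k | ∃ L : Set V, tri (loopPattern G L) = k}
      ∈ {k | ∃ L : Set V, tri (loopPattern G L) = k} :=
    Nat.sInf_mem ⟨tri (loopPattern G ∅), ∅, rfl⟩
  obtain ⟨L1, hL1⟩ := hInf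
  apply le_antisymm
  · -- Zhat = Zloop L0 = n - tri L0 ≤ n - sInf
    have h1 : sInf {k | ∃ L : Set V, tri (loopPattern G L) = k} ≤ tri (loopPattern G L0) :=
      Nat.sInf_le ⟨L0, rfl⟩
    have h2 := hkey L0
    omega
  · -- n - sInf = n - tri L1 = Zloop L1 ≤ Zhat
    have h1 : Zloop G L1 ≤ Zhat G := by
      have : Zloop G L1 ∈ {m | ∃ L : Set V, Zloop G L = m} := ⟨L1, rfl⟩
      exact le_csSup hbdd this
    have h2 := hkey L1
    omega
end

section
/- Let Ĝ be a looping of a finite simple graph G, let 𝒜 be the zero-nonzero pattern of the (looped) adjacency of Ĝ, and let R and C be subsets of V(G) with |R|=|C|. Then the submatrix 𝒜[R,C] is a triangle if and only if V(G)∖C is a loop zero forcing set for Ĝ from which R can be the set of vertices that force. -/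
/-!  Common definitions: zero forcing (standard, loop, positive semidefinite),
zero-nonzero patterns, triangles, and related graph parameters. -/

variable {V : Type*}

lemma loopPattern_iff (G : SimpleGraph V) (L : Set V) (i j : V) :
    loopPattern G L i j ↔ LoopAdj G L i j := by
  unfold loopPattern LoopAdj
  constructor
  · rintro (⟨h1, h2⟩ | ⟨h1, h2⟩)
    · exact Or.inr ⟨h1, h2⟩
    · exact Or.inl h2
  · rintro (h | ⟨h1, h2⟩)
    · exact Or.inr ⟨h.ne, h⟩
    · exact Or.inl ⟨h1, h2⟩

lemma targetsOf_nil : targetsOf ([] : List (V × V)) = ∅ := by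
  simp [targetsOf]

lemma targetsOf_cons (p : V × V) (l : List (V × V)) :
    targetsOf (p :: l) = insert p.2 (targetsOf l) := by
  ext x; constructor
  · rintro ⟨q, hq, rfl⟩
    rcases List.mem_cons.mp hq with rfl | h
    · exact Set.mem_insert _ _
    · exact Set.mem_insert_of_mem _ ⟨q, h, rfl⟩
  · rintro (rfl | ⟨a, h, rfl⟩)
    · exact ⟨p, List.mem_cons_self, rfl⟩
    · exact ⟨a, List.mem_cons_of_mem _ h, rfl⟩

lemma validSeq_iff (rule : Set V → V → V → Prop) (seq : List (V × V)) (F : Set V) :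
    ValidSeq rule seq F ↔ seq.Pairwise (fun p q => p.1 ≠ q.1) ∧
      ∀ i : Fin seq.length, rule (F ∪ targetsOf (seq.take i)) (seq.get i).1 (seq.get i).2 := by
  induction seq generalizing F with
  | nil => simp [ValidSeq]
  | cons p rest ih =>
    obtain ⟨v, u⟩ := p
    rw [show ValidSeq rule ((v,u) :: rest) F =
      (rule F v u ∧ (∀ p ∈ rest, p.1 ≠ v) ∧ ValidSeq rule rest (insert u F)) from rfl,
      ih, List.pairwise_cons]
    have key : ∀ j : ℕ, F ∪ targetsOf (((v,u) :: rest).take (j+1)) =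
        insert u F ∪ targetsOf (rest.take j) := by
      intro j
      rw [List.take_succ_cons, targetsOf_cons]
      ext x
      simp only [Set.mem_union, Set.mem_insert_iff]
      tauto
    constructor
    · rintro ⟨h0, hne, hpw, hall⟩
      refine ⟨⟨fun q hq => (hne q hq).symm, hpw⟩, ?_⟩
      intro i
      refine Fin.cases ?_ ?_ i
      · simpa [targetsOf_nil] using h0
      · intro j
        have h := hall j
        rw [← key j.val] at h
        exact h
    · rintro ⟨⟨hne, hpw⟩, hall⟩
      have h0 := hall ⟨0, Nat.succ_pos _⟩
      simp only [List.take_zero, targetsOf_nil, Set.union_empty, List.get] at h0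
      refine ⟨h0, fun q hq => (hne q hq).symm, hpw, ?_⟩
      intro j
      have h := hall j.succ
      rw [show (j.succ : Fin ((v,u) :: rest).length).val = j.val + 1 from rfl, key j.val] at h
      exact h

lemma mem_targetsOf_take {seq : List (V × V)} {n : ℕ} {x : V} :
    x ∈ targetsOf (seq.take n) ↔ ∃ i : Fin seq.length, (i : ℕ) < n ∧ (seq.get i).2 = x := by
  simp only [targetsOf, Set.mem_setOf_eq]
  constructor
  · rintro ⟨p, hp, rfl⟩
    rw [List.mem_take_iff_getElem] at hp
    obtain ⟨i, hi, hget⟩ := hp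
    exact ⟨⟨i, (lt_inf_iff.mp hi).2⟩, (lt_inf_iff.mp hi).1, by rw [← hget]; rfl⟩
  · rintro ⟨i, hin, rfl⟩
    refine ⟨seq.get i, List.mem_take_iff_getElem.mpr ⟨i.val, lt_inf_iff.mpr ⟨hin, i.isLt⟩, ?_⟩, rfl⟩
    rfl

lemma mem_targetsOf {seq : List (V × V)} {x : V} :
    x ∈ targetsOf seq ↔ ∃ i : Fin seq.length, (seq.get i).2 = x := by
  simp only [targetsOf, Set.mem_setOf_eq]
  constructor
  · rintro ⟨p, hp, rfl⟩
    obtain ⟨i, rfl⟩ := List.mem_iff_get.mp hp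
    exact ⟨i, rfl⟩
  · rintro ⟨i, rfl⟩
    exact ⟨seq.get i, List.get_mem _ _, rfl⟩

lemma mem_sourcesOf {seq : List (V × V)} {x : V} :
    x ∈ sourcesOf seq ↔ ∃ i : Fin seq.length, (seq.get i).1 = x := by
  simp only [sourcesOf, Set.mem_setOf_eq]
  constructor
  · rintro ⟨p, hp, rfl⟩
    obtain ⟨i, rfl⟩ := List.mem_iff_get.mp hp
    exact ⟨i, rfl⟩
  · rintro ⟨i, rfl⟩
    exact ⟨seq.get i, List.get_mem _ _, rfl⟩

/-- For a looping of `G` with loops at `L` and `R, C ⊆ V(G)` with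
`|R| = |C|`, the submatrix `𝒜[R,C]` of the pattern of the looping is a triangle iff
`V(G) \\ C` is a loop zero forcing set from which `R` can be the set of vertices
that force. -/
theorem subtriangle_iff_loop_forcing
    {V : Type*} [Fintype V] [DecidableEq V] (G : SimpleGraph V) (L : Set V)
    (R C : Finset V) (hRC : R.card = C.card) :
    SubIsTriangle (loopPattern G L) R C ↔
      ForcesWith (LoopForce G L) (↑(Cᶜ) : Set V) (↑R : Set V) := by
  constructor
  · rintro ⟨k, r, c, hrinj, hcinj, hR, hC, hdiag, hoff⟩
    set seq : List (V × V) := (List.finRange k).map (fun i => (r i, c i)) with hseq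
    have hlen : seq.length = k := by simp [hseq]
    have hget : ∀ i : Fin seq.length,
        seq.get i = (r (Fin.cast hlen i), c (Fin.cast hlen i)) := by
      intro i
      simp only [hseq, List.get_eq_getElem, List.getElem_map, List.getElem_finRange]
      rfl
    refine ⟨seq, ?_, ?_, ?_⟩
    · rw [validSeq_iff]
      constructor
      · rw [hseq, List.pairwise_map]
        refine (List.nodup_finRange k).pairwise_of_forall_ne ?_
        intro a _ b _ hab hr
        exact hab (hrinj hr)
      · intro i
        set j : Fin k := Fin.cast hlen i with hj
        have hiv : (i : ℕ) = (j : ℕ) := rfl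
        rw [hget i]
        refine ⟨?_, (loopPattern_iff G L _ _).mp (hdiag j), ?_⟩
        · rintro (hmem | hmem)
          · have hcj : c j ∈ C := (hC (c j)).mpr ⟨j, rfl⟩
            simp only [Finset.coe_compl, Set.mem_compl_iff, Finset.mem_coe] at hmem
            exact hmem hcj
          · obtain ⟨i', hi', hci'⟩ := mem_targetsOf_take.mp hmem
            rw [hget i'] at hci'
            have hv := congrArg Fin.val (hcinj hci')
            simp only [Fin.coe_cast] at hv
            omega
        · intro w hadj hw
          have hwC : w ∈ C := by
            by_contra hwc
            exact hw (Or.inl (by simpa using hwc))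
          obtain ⟨i', rfl⟩ := (hC w).mp hwC
          have hge : (j : ℕ) ≤ (i' : ℕ) := by
            by_contra hlt
            push_neg at hlt
            refine hw (Or.inr (mem_targetsOf_take.mpr ⟨Fin.cast hlen.symm i', ?_, ?_⟩))
            · simpa [hiv] using hlt
            · rw [hget]
              simp
          rcases eq_or_lt_of_le hge with heq | hlt
          · exact congrArg c (Fin.ext heq.symm)
          · exact absurd ((loopPattern_iff G L _ _).mpr hadj) (hoff j i' hlt)
    · ext x
      simp only [filledAfter, Set.mem_union, mem_targetsOf, Set.mem_univ, iff_true]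
      by_cases hx : x ∈ C
      · obtain ⟨i, rfl⟩ := (hC x).mp hx
        refine Or.inr ⟨Fin.cast hlen.symm i, ?_⟩
        rw [hget]
        rfl
      · refine Or.inl ?_
        simpa using hx
    · ext x
      rw [mem_sourcesOf]
      simp only [Finset.mem_coe]
      rw [hR x]
      constructor
      · rintro ⟨i, rfl⟩
        exact ⟨Fin.cast hlen i, by rw [hget]⟩
      · rintro ⟨i, rfl⟩
        exact ⟨Fin.cast hlen.symm i, by rw [hget]; rfl⟩
  · rintro ⟨seq, hvalid, hfill, hsrc⟩
    rw [validSeq_iff] at hvalid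
    obtain ⟨hpw, hrule⟩ := hvalid
    have hnot : ∀ i : Fin seq.length,
        (seq.get i).2 ∉ (↑(Cᶜ) : Set V) ∪ targetsOf (seq.take i) := fun i => (hrule i).1
    have htC : ∀ i : Fin seq.length, (seq.get i).2 ∈ C := by
      intro i
      by_contra h
      exact hnot i (Or.inl (by simpa using h))
    have hmemtake : ∀ i j : Fin seq.length, (i : ℕ) < (j : ℕ) →
        (seq.get i).2 ∈ targetsOf (seq.take j) := by
      intro i j hij
      exact mem_targetsOf_take.mpr ⟨i, hij, rfl⟩
    have hcinj : Function.Injective (fun i : Fin seq.length => (seq.get i).2) := by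
      intro i j h
      simp only at h
      rcases lt_trichotomy (i : ℕ) (j : ℕ) with hlt | heq | hgt
      · exact absurd (Or.inr (h ▸ hmemtake i j hlt)) (hnot j)
      · exact Fin.ext heq
      · exact absurd (Or.inr (h.symm ▸ hmemtake j i hgt)) (hnot i)
    have hrinj : Function.Injective (fun i : Fin seq.length => (seq.get i).1) := by
      have hpg := List.pairwise_iff_get.mp hpw
      intro i j h
      simp only at h
      rcases lt_trichotomy i j with hlt | heq | hgt
      · exact absurd h (hpg i j hlt)
      · exact heq
      · exact absurd h.symm (hpg j i hgt)
    refine ⟨seq.length, fun i => (seq.get i).1, fun i => (seq.get i).2,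
      hrinj, hcinj, ?_, ?_, ?_, ?_⟩
    · intro x
      rw [show (x ∈ R) = (x ∈ (↑R : Set V)) from rfl, ← hsrc, mem_sourcesOf]
    · intro y
      constructor
      · intro hy
        have : y ∈ filledAfter (↑(Cᶜ) : Set V) seq := hfill ▸ Set.mem_univ y
        rcases this with h | h
        · exact absurd hy (by simpa using h)
        · exact mem_targetsOf.mp h
      · rintro ⟨i, rfl⟩
        exact htC i
    · intro i
      exact (loopPattern_iff G L _ _).mpr (hrule i).2.1
    · intro i j hij hY
      have hadj := (loopPattern_iff G L _ _).mp hY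
      have hne : (seq.get j).2 ≠ (seq.get i).2 := fun h => (Fin.lt_iff_val_lt_val.mp hij).ne (congrArg Fin.val (hcinj h)).symm
      refine hne ((hrule i).2.2 _ hadj ?_)
      rintro (h | h)
      · exact absurd (htC j) (by simpa using h)
      · obtain ⟨i', hi', hci'⟩ := mem_targetsOf_take.mp h
        have : i' = j := hcinj hci'
        subst this
        exact absurd (lt_trans hi' hij) (lt_irrefl _)
end

section
/- Let G be a finite simple graph with F, R ⊆ V(G). The following are equivalent: (1) F is a zero forcing set for G from which R can be the set of vertices that force (under the standard zero forcing rule); (2) for every looping Ĝ of G, F is a loop zero forcing set for Ĝ from which R can be the set of vertices that force. -/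
/-!  Common definitions: zero forcing (standard, loop, positive semidefinite),
zero-nonzero patterns, triangles, and related graph parameters. -/

variable {V : Type*}

section Aux

lemma loopForce_mono {G : SimpleGraph V} {L S S' : Set V} {v u : V}
    (h : LoopForce G L S v u) (hSS : S ⊆ S') (hu : u ∉ S') : LoopForce G L S' v u := by
  obtain ⟨_, hadj, hcond⟩ := h
  exact ⟨hu, hadj, fun w hw hwS => hcond w hw (fun hwS' => hwS (hSS hwS'))⟩

lemma stdForce_loopForce {G : SimpleGraph V} {L S : Set V} {v u : V}
    (h : StdForce G S v u) : LoopForce G L S v u := by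
  obtain ⟨hv, hu, hadj, hcond⟩ := h
  refine ⟨hu, Or.inl hadj, fun w hw hwS => ?_⟩
  rcases hw with h1 | ⟨h2, _⟩
  · exact hcond w h1 hwS
  · exact absurd (h2 ▸ hv) hwS

lemma validSeq_mono {rule rule' : Set V → V → V → Prop}
    (h : ∀ S v u, rule S v u → rule' S v u) :
    ∀ (σ : List (V × V)) (S : Set V), ValidSeq rule σ S → ValidSeq rule' σ S
  | [], _, _ => trivial
  | (v, u) :: rest, S, hv => ⟨h _ _ _ hv.1, hv.2.1, validSeq_mono h rest _ hv.2.2⟩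

lemma validSeq_source {rule : Set V → V → V → Prop} :
    ∀ (σ : List (V × V)) (S : Set V), ValidSeq rule σ S → ∀ p ∈ σ,
      ∃ S', S ⊆ S' ∧ rule S' p.1 p.2
  | [], _, _, p, hp => absurd hp List.not_mem_nil
  | (v, u) :: rest, S, hv, p, hp => by
    rcases List.mem_cons.mp hp with rfl | hp'
    · exact ⟨S, subset_rfl, hv.1⟩
    · obtain ⟨S', hS', hr⟩ := validSeq_source rest _ hv.2.2 p hp'
      exact ⟨S', (Set.subset_insert u S).trans hS', hr⟩

lemma validSeq_ne_of_split {rule : Set V → V → V → Prop} {v u : V} {β : List (V × V)} :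
    ∀ (γ : List (V × V)) (S : Set V), ValidSeq rule (γ ++ (v, u) :: β) S →
      ∀ p ∈ γ ++ β, p.1 ≠ v
  | [], S, h, p, hp => by
    simp only [List.nil_append] at h hp
    exact h.2.1 p hp
  | (a, b) :: γ', S, h, p, hp => by
    rcases List.mem_cons.mp hp with rfl | hp'
    · intro hav
      exact h.2.1 (v, u) (by simp) hav.symm
    · exact validSeq_ne_of_split γ' _ h.2.2 p hp'

lemma validSeq_target_not_mem {G : SimpleGraph V} {L : Set V} {v u : V} {β : List (V × V)} :
    ∀ (γ : List (V × V)) (S : Set V), ValidSeq (LoopForce G L) (γ ++ (v, u) :: β) S → u ∉ S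
  | [], _, h => h.1.1
  | (a, b) :: γ', S, h => fun huS =>
      validSeq_target_not_mem γ' _ h.2.2 (Set.mem_insert_iff.mpr (Or.inr huS))

lemma validSeq_reorder {G : SimpleGraph V} {L : Set V} {v u : V} {β : List (V × V)} :
    ∀ (γ : List (V × V)) (S : Set V), ValidSeq (LoopForce G L) (γ ++ (v, u) :: β) S →
      LoopForce G L S v u → ValidSeq (LoopForce G L) ((v, u) :: (γ ++ β)) S
  | [], S, h, _ => h
  | (a, b) :: γ', S, h, hf => by
    have hne := validSeq_ne_of_split ((a, b) :: γ') S h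
    have hub : u ∉ insert b S := validSeq_target_not_mem γ' _ h.2.2
    have hrec := validSeq_reorder γ' (insert b S) h.2.2
      (loopForce_mono hf (Set.subset_insert _ _) hub)
    refine ⟨hf, hne, ?_, ?_, ?_⟩
    · refine loopForce_mono h.1 (Set.subset_insert _ _) ?_
      intro hb
      rcases Set.mem_insert_iff.mp hb with hbu | hbS
      · subst hbu; exact hub (Set.mem_insert _ _)
      · exact h.1.1 hbS
    · intro p hp
      refine h.2.1 p ?_
      rcases List.mem_append.mp hp with h1 | h1
      · exact List.mem_append.mpr (Or.inl h1)
      · exact List.mem_append.mpr (Or.inr (List.mem_cons_of_mem _ h1))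
    · have := hrec.2.2
      rwa [Set.insert_comm] at this

lemma sourcesOf_nil : sourcesOf ([] : List (V × V)) = ∅ := by
  ext x; simp [sourcesOf]

lemma sourcesOf_cons (p : V × V) (l : List (V × V)) :
    sourcesOf (p :: l) = insert p.1 (sourcesOf l) := by
  ext x; simp [sourcesOf, List.mem_cons, or_and_right, exists_or, eq_comm]

lemma targetsOf_middle (γ β : List (V × V)) (p : V × V) :
    targetsOf (γ ++ p :: β) = insert p.2 (targetsOf (γ ++ β)) := by
  ext x
  simp only [targetsOf, Set.mem_setOf_eq, List.mem_append, List.mem_cons,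
    Set.mem_insert_iff]
  constructor
  · rintro ⟨q, hq | (hq | hq), hq2⟩
    · exact Or.inr ⟨q, Or.inl hq, hq2⟩
    · exact Or.inl (hq ▸ hq2).symm
    · exact Or.inr ⟨q, Or.inr hq, hq2⟩
  · rintro (h | ⟨q, hq | hq, hq2⟩)
    · exact ⟨p, Or.inr (Or.inl rfl), h.symm⟩
    · exact ⟨q, Or.inl hq, hq2⟩
    · exact ⟨q, Or.inr (Or.inr hq), hq2⟩

lemma sourcesOf_middle (γ β : List (V × V)) (p : V × V) :
    sourcesOf (γ ++ p :: β) = insert p.1 (sourcesOf (γ ++ β)) := by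
  ext x
  simp only [sourcesOf, Set.mem_setOf_eq, List.mem_append, List.mem_cons,
    Set.mem_insert_iff]
  constructor
  · rintro ⟨q, hq | (hq | hq), hq2⟩
    · exact Or.inr ⟨q, Or.inl hq, hq2⟩
    · exact Or.inl (hq ▸ hq2).symm
    · exact Or.inr ⟨q, Or.inr hq, hq2⟩
  · rintro (h | ⟨q, hq | hq, hq2⟩)
    · exact ⟨p, Or.inr (Or.inl rfl), h.symm⟩
    · exact ⟨q, Or.inl hq, hq2⟩
    · exact ⟨q, Or.inr (Or.inr hq), hq2⟩

lemma forcesWith_univ {G : SimpleGraph V} {R : Set V}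
    (H : ForcesWith (LoopForce G ∅) Set.univ R) : ForcesWith (StdForce G) Set.univ R := by
  obtain ⟨σ, hv, hf, hs⟩ := H
  cases σ with
  | nil => exact ⟨[], trivial, hf, hs⟩
  | cons p rest =>
    obtain ⟨a, b⟩ := p
    exact absurd (Set.mem_univ b) hv.1.1

lemma loop_to_std {V : Type*} [Fintype V] [DecidableEq V] (G : SimpleGraph V) :
    ∀ (n : ℕ) (F R : Set V), Fᶜ.ncard ≤ n →
      (∀ L : Set V, ForcesWith (LoopForce G L) F R) → ForcesWith (StdForce G) F R := by
  intro n
  induction n with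
  | zero =>
    intro F R hF H
    have h0 : Fᶜ.ncard = 0 := Nat.le_zero.mp hF
    have h2 : Fᶜ = ∅ := (Set.ncard_eq_zero (Set.toFinite _)).mp h0
    have h3 : F = Set.univ := by rwa [Set.compl_empty_iff] at h2
    subst h3
    exact forcesWith_univ (H ∅)
  | succ m ih =>
    intro F R hF H
    by_cases hFu : F = Set.univ
    · subst hFu; exact forcesWith_univ (H ∅)
    obtain ⟨σ, hval, hfill, hsrc⟩ := H Fᶜ
    cases σ with
    | nil =>
      exfalso
      apply hFu
      rw [filledAfter, targetsOf_nil, Set.union_empty] at hfill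
      exact hfill
    | cons p rest =>
      obtain ⟨v, u⟩ := p
      have h1 : LoopForce G Fᶜ F v u := hval.1
      have hvR : v ∈ R := by
        rw [← hsrc]; exact ⟨(v, u), List.mem_cons_self, rfl⟩
      have huF : u ∉ F := h1.1
      by_cases hvF : v ∈ F
      · -- the first force is a standard force
        have hadj : G.Adj v u := by
          rcases h1.2.1 with h | ⟨_, hm⟩
          · exact h
          · exact absurd hvF hm
        have hstd : StdForce G F v u :=
          ⟨hvF, huF, hadj, fun w hw hwF => h1.2.2 w (Or.inl hw) hwF⟩
        -- the hypothesis descends to (insert u F, R \ {v})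
        have H' : ∀ L : Set V, ForcesWith (LoopForce G L) (insert u F) (R \ {v}) := by
          intro L
          obtain ⟨τ, hτv, hτf, hτs⟩ := H L
          have hvτ : v ∈ sourcesOf τ := by rw [hτs]; exact hvR
          obtain ⟨p, hpτ, hp1⟩ := hvτ
          obtain ⟨S', hS', hrule⟩ := validSeq_source τ F hτv p hpτ
          have hcu : p.2 = u := by
            rcases hrule.2.1 with h | ⟨heq, _⟩
            · exact hstd.2.2.2 p.2 (hp1 ▸ h) (fun hm => hrule.1 (hS' hm))
            · exact absurd (hS' (heq ▸ hp1 ▸ hvF)) hrule.1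
          have hp : p = (v, u) := Prod.ext hp1 hcu
          subst hp
          obtain ⟨γ, β, hsplit⟩ := List.append_of_mem hpτ
          rw [hsplit] at hτv hτf hτs
          have hfF : LoopForce G L F v u := by
            refine ⟨huF, Or.inl hadj, fun w hw hwF => ?_⟩
            rcases hw with h | ⟨heq, _⟩
            · exact hstd.2.2.2 w h hwF
            · exact absurd (heq ▸ hvF) hwF
          have hre := validSeq_reorder γ F hτv hfF
          refine ⟨γ ++ β, hre.2.2, ?_, ?_⟩
          · rw [filledAfter, Set.insert_union]
            rw [filledAfter, targetsOf_middle, Set.union_insert] at hτf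
            exact hτf
          · have hvnot : v ∉ sourcesOf (γ ++ β) := by
              rintro ⟨q, hq, hq1⟩
              exact validSeq_ne_of_split γ F hτv q hq hq1
            rw [sourcesOf_middle] at hτs
            ext x
            constructor
            · intro hx
              refine ⟨?_, ?_⟩
              · rw [← hτs]; exact Set.mem_insert_iff.mpr (Or.inr hx)
              · intro hxv
                rw [Set.mem_singleton_iff] at hxv
                exact hvnot (hxv ▸ hx)
            · rintro ⟨hx, hxv⟩
              rw [← hτs] at hx
              rcases Set.mem_insert_iff.mp hx with h | h
              · exact absurd (Set.mem_singleton_iff.mpr h) hxv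
              · exact h
        have hcard : (insert u F)ᶜ.ncard ≤ m := by
          have hmem : u ∈ Fᶜ := huF
          have hlt : (Fᶜ \ {u}).ncard < Fᶜ.ncard :=
            Set.ncard_diff_singleton_lt_of_mem hmem (Set.toFinite _)
          have he : (insert u F)ᶜ = Fᶜ \ {u} := by
            ext x; simp [Set.mem_compl_iff, and_comm]
          rw [he]
          omega
        obtain ⟨δ, hδv, hδf, hδs⟩ := ih (insert u F) (R \ {v}) hcard H'
        refine ⟨(v, u) :: δ, ⟨hstd, ?_, hδv⟩, ?_, ?_⟩
        · intro q hq hqv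
          have hmem : q.1 ∈ sourcesOf δ := ⟨q, hq, rfl⟩
          rw [hδs] at hmem
          exact hmem.2 (Set.mem_singleton_iff.mpr hqv)
        · rw [filledAfter, targetsOf_cons, Set.union_insert]
          rw [filledAfter, Set.insert_union] at hδf
          exact hδf
        · rw [sourcesOf_cons, hδs]
          simp only
          rw [Set.insert_diff_singleton, Set.insert_eq_of_mem hvR]
      · -- the first force would be a self force: contradiction via the empty looping
        exfalso
        have hvc : v ∈ Fᶜ := hvF
        have hNv : ∀ w, G.Adj v w → w ∈ F := by
          intro w hw
          by_contra hwF
          have h2 : w = u := h1.2.2 w (Or.inl hw) hwF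
          have h3 : v = u := h1.2.2 v (Or.inr ⟨rfl, hvc⟩) hvF
          rw [h2, ← h3] at hw
          exact G.loopless.irrefl v hw
        obtain ⟨τ, hτv, hτf, hτs⟩ := H ∅
        have hvτ : v ∈ sourcesOf τ := by rw [hτs]; exact hvR
        obtain ⟨p, hpτ, hp1⟩ := hvτ
        obtain ⟨S', hS', hrule⟩ := validSeq_source τ F hτv p hpτ
        rcases hrule.2.1 with h | ⟨_, hm⟩
        · exact hrule.1 (hS' (hNv p.2 (hp1 ▸ h)))
        · exact absurd hm (Set.notMem_empty _)

end Aux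

/-- `F` is a zero forcing set for `G` from which `R` can be the set of
vertices that force iff, for every looping of `G`, `F` is a loop zero forcing set from
which `R` can be the set of vertices that force. -/
theorem std_forcing_iff_all_loopings
    {V : Type*} [Fintype V] [DecidableEq V] (G : SimpleGraph V) (F R : Set V) :
    ForcesWith (StdForce G) F R ↔ ∀ L : Set V, ForcesWith (LoopForce G L) F R := by
  constructor
  · rintro ⟨σ, hval, hfill, hsrc⟩ L
    exact ⟨σ, validSeq_mono (fun _ _ _ h => stdForce_loopForce h) σ F hval, hfill, hsrc⟩
  · intro H
    exact loop_to_std G Fᶜ.ncard F R le_rfl H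
end

section
/- Let G be a finite simple graph and let R and C be subsets of V(G) with |R|=|C|. Then (R,C) is an immutable triangle of G if and only if V(G)∖C is a direct zero forcing set for G from which R can be the set of vertices that force. -/
/-!  Common definitions: zero forcing (standard, loop, positive semidefinite),
zero-nonzero patterns, triangles, and related graph parameters. -/

variable {V : Type*}

lemma validSeq_ofFn_aux (G : SimpleGraph V) :
    ∀ (k : ℕ) (F : Set V) (r c : Fin k → V),
      Function.Injective r → Function.Injective c →
      (∀ i, r i ∈ F) → (∀ i, c i ∉ F) →
      (∀ i, G.Adj (r i) (c i)) → (∀ i j, i < j → ¬ G.Adj (r i) (c j)) →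
      (∀ w, w ∉ F → ∃ j, c j = w) →
      ValidSeq (StdForce G) (List.ofFn (fun i => (r i, c i))) F := by
  intro k
  induction k with
  | zero =>
    intro F r c _ _ _ _ _ _ _
    simp [ValidSeq]
  | succ k ih =>
    intro F r c hrinj hcinj hrF hcF hadj htri hcov
    rw [List.ofFn_succ]
    refine ⟨⟨hrF 0, hcF 0, hadj 0, ?_⟩, ?_, ?_⟩
    · intro w hw hwF
      obtain ⟨j, rfl⟩ := hcov w hwF
      by_contra hne
      have hj0 : (0 : Fin (k + 1)) < j :=
        Fin.pos_of_ne_zero (fun h => hne (by rw [h]))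
      exact htri 0 j hj0 hw
    · intro p hp
      simp only [List.mem_ofFn] at hp
      obtain ⟨i, rfl⟩ := hp
      exact fun h => Fin.succ_ne_zero i (hrinj h)
    · refine ih (insert (c 0) F) (fun i => r i.succ) (fun i => c i.succ)
        (fun a b h => Fin.succ_injective _ (hrinj h))
        (fun a b h => Fin.succ_injective _ (hcinj h))
        (fun i => Set.mem_insert_of_mem _ (hrF i.succ))
        (fun i hi => ?_) (fun i => hadj i.succ)
        (fun i j hij => htri i.succ j.succ (Fin.succ_lt_succ_iff.mpr hij)) ?_
      · rcases Set.mem_insert_iff.mp hi with h | h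
        · exact Fin.succ_ne_zero i (hcinj h)
        · exact hcF i.succ h
      · intro w hw
        have hw0 : w ≠ c 0 := fun h => hw (h ▸ Set.mem_insert _ _)
        have hwF : w ∉ F := fun h => hw (Set.mem_insert_of_mem _ h)
        obtain ⟨j, rfl⟩ := hcov w hwF
        have hj : j ≠ 0 := fun h => hw0 (by rw [h])
        obtain ⟨j', rfl⟩ := Fin.exists_succ_eq.mpr hj
        exact ⟨j', rfl⟩

lemma validSeq_props_s6 (G : SimpleGraph V) :
    ∀ (seq : List (V × V)) (F : Set V), ValidSeq (StdForce G) seq F →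
      (∀ p ∈ seq, p.2 ∉ F ∧ G.Adj p.1 p.2) ∧
      seq.Pairwise (fun p q => p.1 ≠ q.1 ∧ p.2 ≠ q.2 ∧ ¬ G.Adj p.1 q.2) := by
  intro seq
  induction seq with
  | nil => intro F _; exact ⟨by simp, List.Pairwise.nil⟩
  | cons hd tl ih =>
    intro F hv
    obtain ⟨v, u⟩ := hd
    obtain ⟨hf, hne, hrest⟩ := hv
    obtain ⟨ih1, ih2⟩ := ih (insert u F) hrest
    constructor
    · intro p hp
      rcases List.mem_cons.mp hp with rfl | hp
      · exact ⟨hf.2.1, hf.2.2.1⟩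
      · obtain ⟨h1, h2⟩ := ih1 p hp
        exact ⟨fun h => h1 (Set.mem_insert_of_mem _ h), h2⟩
    · refine List.Pairwise.cons (fun q hq => ?_) ih2
      have hq2 : q.2 ∉ insert u F := (ih1 q hq).1
      refine ⟨fun h => hne q hq h.symm, fun h => hq2 (h ▸ Set.mem_insert _ _),
        fun hadj => ?_⟩
      have hqF : q.2 ∉ F := fun h => hq2 (Set.mem_insert_of_mem _ h)
      exact hq2 ((hf.2.2.2 q.2 hadj hqF) ▸ Set.mem_insert _ _)

/-- `(R, C)` is an immutable triangle of `G` iff `V(G) \\ C` is a direct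
zero forcing set for `G` from which `R` can be the set of vertices that force. -/
theorem immutable_triangle_iff_direct_forcing
    {V : Type*} [Fintype V] [DecidableEq V] (G : SimpleGraph V)
    (R C : Finset V) (hRC : R.card = C.card) :
    (PersistentTriangle G R C ∧ Disjoint R C) ↔
      DirectForcesWith G (↑(Cᶜ) : Set V) (↑R : Set V) := by
  have hFC : (↑(Cᶜ) : Set V) = (↑C : Set V)ᶜ := Finset.coe_compl C
  constructor
  · rintro ⟨hPT, hdisj⟩
    have hA : InSznz G (fun i j => i ≠ j ∧ G.Adj i j) := fun i j hij => by simp [hij]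
    obtain ⟨k, r, c, hrinj, hcinj, hrR, hcC, hdiag, hup⟩ := hPT _ hA
    have hrMem : ∀ i, r i ∈ R := fun i => (hrR (r i)).mpr ⟨i, rfl⟩
    have hcMem : ∀ i, c i ∈ C := fun i => (hcC (c i)).mpr ⟨i, rfl⟩
    have hrnc : ∀ i j, r i ≠ c j := fun i j h =>
      (Finset.disjoint_left.mp hdisj (hrMem i)) (h ▸ hcMem j)
    have hadj : ∀ i, G.Adj (r i) (c i) := fun i => (hdiag i).2
    have htri : ∀ i j, i < j → ¬ G.Adj (r i) (c j) := fun i j hij hadj' =>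
      hup i j hij ⟨hrnc i j, hadj'⟩
    have hrF : ∀ i, r i ∈ (↑(Cᶜ) : Set V) := fun i => by
      rw [hFC]
      exact fun h => Finset.disjoint_left.mp hdisj (hrMem i) h
    have hcF : ∀ i, c i ∉ (↑(Cᶜ) : Set V) := fun i => by
      rw [hFC]
      intro h
      exact h (hcMem i)
    have hcov : ∀ w, w ∉ (↑(Cᶜ) : Set V) → ∃ j, c j = w := by
      intro w hw
      rw [hFC] at hw
      exact (hcC w).mp (by simpa using hw)
    have hvalid := validSeq_ofFn_aux G k _ r c hrinj hcinj hrF hcF hadj htri hcov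
    refine ⟨List.ofFn (fun i => (r i, c i)), hvalid, ?_, ?_, ?_⟩
    · ext v
      simp only [Set.mem_univ, iff_true, filledAfter, Set.mem_union]
      by_cases hv : v ∈ C
      · obtain ⟨j, hj⟩ := (hcC v).mp hv
        exact Or.inr ⟨(r j, c j), List.mem_ofFn.mpr ⟨j, rfl⟩, hj⟩
      · left
        rw [hFC]
        simpa using hv
    · ext x
      simp only [sourcesOf, Set.mem_setOf_eq, Finset.mem_coe]
      constructor
      · rintro ⟨p, hp, rfl⟩
        obtain ⟨i, rfl⟩ := List.mem_ofFn.mp hp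
        exact hrMem i
      · intro hx
        obtain ⟨i, hi⟩ := (hrR x).mp hx
        exact ⟨(r i, c i), List.mem_ofFn.mpr ⟨i, rfl⟩, hi⟩
    · intro x hx
      rw [hFC]
      exact fun h => Finset.disjoint_left.mp hdisj (by simpa using hx) h
  · rintro ⟨seq, hvalid, hfill, hsrc, hRF⟩
    obtain ⟨h1, h2⟩ := validSeq_props_s6 G seq _ hvalid
    rw [List.pairwise_iff_get] at h2
    have hsrcC : ∀ p ∈ seq, p.1 ∈ (↑(Cᶜ) : Set V) := by
      intro p hp
      exact hRF (by rw [← hsrc]; exact ⟨p, hp, rfl⟩)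
    have htgtC : ∀ p ∈ seq, p.2 ∈ (↑C : Set V) := by
      intro p hp
      have := (h1 p hp).1
      rw [hFC] at this
      simpa using this
    have hne12 : ∀ p ∈ seq, ∀ q ∈ seq, p.1 ≠ q.2 := by
      intro p hp q hq h
      have h1' := hsrcC p hp
      rw [hFC] at h1'
      exact h1' (h ▸ htgtC q hq)
    have hdisj : Disjoint R C := by
      rw [Finset.disjoint_left]
      intro a haR haC
      have : (a : V) ∈ (↑(Cᶜ) : Set V) := hRF (by simpa using haR)
      rw [hFC] at this
      exact this (by simpa using haC)
    have hgm : ∀ i : Fin seq.length, seq.get i ∈ seq := fun i => List.mem_iff_get.mpr ⟨i, rfl⟩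
    refine ⟨fun A hAz => ?_, hdisj⟩
    refine ⟨seq.length, fun i => (seq.get i).1, fun i => (seq.get i).2, ?_, ?_, ?_, ?_, ?_, ?_⟩
    · intro i j h
      by_contra hne
      rcases lt_or_gt_of_ne hne with hij | hij
      · exact (h2 i j hij).1 h
      · exact (h2 j i hij).1 h.symm
    · intro i j h
      by_contra hne
      rcases lt_or_gt_of_ne hne with hij | hij
      · exact (h2 i j hij).2.1 h
      · exact (h2 j i hij).2.1 h.symm
    · intro x
      rw [← Finset.mem_coe, ← hsrc]
      constructor
      · intro hx
        obtain ⟨p, hp, hpx⟩ := hx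
        obtain ⟨i, hi⟩ := List.mem_iff_get.mp hp
        exact ⟨i, by show (seq.get i).1 = x; rw [hi, hpx]⟩
      · rintro ⟨i, rfl⟩
        exact ⟨seq.get i, hgm i, rfl⟩
    · intro y
      constructor
      · intro hy
        have : (y : V) ∈ (↑C : Set V) := by simpa using hy
        have hy2 : y ∈ filledAfter (↑(Cᶜ) : Set V) seq := hfill ▸ Set.mem_univ y
        rcases hy2 with hy2 | hy2
        · rw [hFC] at hy2
          exact absurd this hy2
        · obtain ⟨p, hp, hpy⟩ := hy2
          obtain ⟨i, hi⟩ := List.mem_iff_get.mp hp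
          exact ⟨i, by show (seq.get i).2 = y; rw [hi, hpy]⟩
      · rintro ⟨i, rfl⟩
        have := htgtC (seq.get i) (hgm i)
        simpa using this
    · intro i
      have hmem := hgm i
      have hne : (seq.get i).1 ≠ (seq.get i).2 := hne12 _ hmem _ hmem
      exact (hAz _ _ hne).mpr (h1 _ hmem).2
    · intro i j hij hAij
      have hne : (seq.get i).1 ≠ (seq.get j).2 :=
        hne12 _ (hgm i) _ (hgm j)
      exact (h2 i j hij).2.2 ((hAz _ _ hne).mp hAij)
end
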